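/- arXiv:1702.03101 — 4 statements merged into one kernel-verified Lean document; each statement's English description precedes it below -/
import Mathlib

section
/- For any BAN F: B^n → B^n and any block-sequential update schedule W, κ(F,W) = ⌈log₂(χ(G_NECC(F,W)))⌉. -/
/-- A configuration of a Boolean automata network of size `n`. -/
abbrev Conf (n : ℕ) := Fin n → Bool

/-- `F_I`: update simultaneously exactly the automata in `I`. -/
def updSet {n : ℕ} (F : Conf n → Conf n) (I : Finset (Fin n)) (x : Conf n) : Conf n :=
  fun i => if i ∈ I then F x i else x i

/-- `W_{<j}`: union of the first `j` blocks of the schedule `W`. -/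
def prefUnion {n : ℕ} (W : List (Finset (Fin n))) (j : ℕ) : Finset (Fin n) :=
  (W.take j).foldr (· ∪ ·) ∅

/-- `W` is a block-sequential update schedule: an ordered partition of the automata. -/
def isSchedule {n : ℕ} (W : List (Finset (Fin n))) : Prop :=
  (∀ B ∈ W, B.Nonempty) ∧ W.Pairwise Disjoint ∧ W.foldr (· ∪ ·) ∅ = Finset.univ

/-- Confusable configurations: identical after updating the first `i` blocks, some `i ∈ [0,p]`. -/
def confusable {n : ℕ} (F : Conf n → Conf n) (W : List (Finset (Fin n))) (x x' : Conf n) : Prop :=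
  ∃ i ≤ W.length, updSet F (prefUnion W i) x = updSet F (prefUnion W i) x'

/-- `CC(x,x')`: the set of steps making `x` and `x'` confusable. -/
def CCset {n : ℕ} (F : Conf n → Conf n) (W : List (Finset (Fin n))) (x x' : Conf n) : Set ℕ :=
  {i | i ≤ W.length ∧ updSet F (prefUnion W i) x = updSet F (prefUnion W i) x'}

/-- The `G_NECC` graph: edges between non-equivalent confusable configurations. -/
def gnecc {n : ℕ} (F : Conf n → Conf n) (W : List (Finset (Fin n))) :
    SimpleGraph (Conf n) where
  Adj x x' := F x ≠ F x' ∧ confusable F W x x'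
  symm := by
    constructor
    rintro x x' ⟨hne, i, hi, h⟩
    exact ⟨hne.symm, i, hi, h.symm⟩
  loopless := by constructor; rintro x ⟨hne, _⟩; exact hne rfl

/-- `F^W`: apply the blocks of `W` sequentially. -/
def runSched {n : ℕ} (F : Conf n → Conf n) (W : List (Finset (Fin n))) (x : Conf n) : Conf n :=
  W.foldl (fun y B => updSet F B y) x

/-- `W(i)`: the index of the block of `W` containing `i`. -/
def stepOf {n : ℕ} (W : List (Finset (Fin n))) (i : Fin n) : ℕ :=
  W.findIdx (fun B => decide (i ∈ B))

/-- `W' ∈ E_h(W,V')`: `W'` extends `W`, preserving the update order via `h`. -/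
def extendsSched {n m : ℕ} (W : List (Finset (Fin n))) (W' : List (Finset (Fin m)))
    (h : Fin n → Fin m) : Prop :=
  ∀ i i' : Fin n, (stepOf W i ≤ stepOf W i' ↔ stepOf W' (h i) ≤ stepOf W' (h i'))

/-- `(F',W')` `h`-simulates `(F,[V])`: `φ_h ∘ F'^{W'} = F ∘ φ_h`. -/
def simulates {n m : ℕ} (F' : Conf m → Conf m) (W' : List (Finset (Fin m)))
    (F : Conf n → Conf n) (h : Fin n → Fin m) : Prop :=
  ∀ z : Conf m, (fun i => runSched F' W' z (h i)) = F (fun i => z (h i))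

/-- `κ(F,W)`: minimal number of additional automata needed to simulate `(F,[V])`
with a schedule extending `W` order-preservingly. -/
noncomputable def kappa {n : ℕ} (F : Conf n → Conf n) (W : List (Finset (Fin n))) : ℕ :=
  sInf {k | ∃ h : Fin n → Fin (n + k), Function.Injective h ∧
    ∃ W' : List (Finset (Fin (n + k))), isSchedule W' ∧ extendsSched W W' h ∧
      ∃ F' : Conf (n + k) → Conf (n + k), simulates F' W' F h}

/-- The simple sequential update schedule `({0},{1},…,{n-1})`. -/
def seqSched (n : ℕ) : List (Finset (Fin n)) := (List.finRange n).map (fun i => {i})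

section Lemmas
variable {n : ℕ}

lemma mem_foldr_union {l : List (Finset (Fin n))} {j : Fin n} :
    j ∈ l.foldr (· ∪ ·) ∅ ↔ ∃ B ∈ l, j ∈ B := by
  induction l with
  | nil => simp
  | cons B l ih => simp [ih]

lemma foldr_union_append (l₁ l₂ : List (Finset (Fin n))) :
    (l₁ ++ l₂).foldr (· ∪ ·) ∅ = l₁.foldr (· ∪ ·) ∅ ∪ l₂.foldr (· ∪ ·) ∅ := by
  induction l₁ with
  | nil => simp
  | cons B l ih => simp [ih, Finset.union_assoc]

lemma updSet_empty (F : Conf n → Conf n) (x : Conf n) : updSet F ∅ x = x := by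
  funext i; simp [updSet]

lemma updSet_univ (F : Conf n → Conf n) (x : Conf n) : updSet F Finset.univ x = F x := by
  funext i; simp [updSet]

lemma prefUnion_zero (W : List (Finset (Fin n))) : prefUnion W 0 = (∅ : Finset (Fin n)) := rfl

lemma prefUnion_length {W : List (Finset (Fin n))} (hW : isSchedule W) :
    prefUnion W W.length = Finset.univ := by
  unfold prefUnion; rw [List.take_length]; exact hW.2.2

lemma stepOf_lt_length {W : List (Finset (Fin n))} (hW : isSchedule W) (j : Fin n) :
    stepOf W j < W.length := by
  apply List.findIdx_lt_length_of_exists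
  have : j ∈ W.foldr (· ∪ ·) ∅ := hW.2.2 ▸ Finset.mem_univ j
  obtain ⟨B, hB, hj⟩ := mem_foldr_union.1 this
  exact ⟨B, hB, by simpa⟩

lemma mem_getElem_stepOf {W : List (Finset (Fin n))} (hW : isSchedule W) (j : Fin n) :
    j ∈ W[stepOf W j]'(stepOf_lt_length hW j) := by
  have := @List.findIdx_getElem _ (fun B => decide (j ∈ B)) W (stepOf_lt_length hW j)
  exact of_decide_eq_true this

lemma stepOf_eq_of_mem {W : List (Finset (Fin n))} (hW : isSchedule W) {j : Fin n} {s : ℕ}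
    (hs : s < W.length) (hj : j ∈ W[s]) : stepOf W j = s := by
  have hle : stepOf W j ≤ s := by
    by_contra hlt
    push_neg at hlt
    have := List.not_of_lt_findIdx (p := fun B => decide (j ∈ B)) (xs := W) (i := s) hlt
    simp at this
    exact this hj
  rcases eq_or_lt_of_le hle with h | h
  · exact h
  · exfalso
    have hd := (List.pairwise_iff_getElem.1 hW.2.1) (stepOf W j) s (by omega) hs h
    exact Finset.disjoint_left.1 hd (mem_getElem_stepOf hW j) hj

lemma mem_prefUnion_iff {W : List (Finset (Fin n))} (hW : isSchedule W) {j : Fin n} {t : ℕ} :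
    j ∈ prefUnion W t ↔ stepOf W j < t := by
  unfold prefUnion
  rw [mem_foldr_union]
  constructor
  · rintro ⟨B, hB, hj⟩
    obtain ⟨s, hs, rfl⟩ := List.getElem_of_mem hB
    rw [List.getElem_take] at hj
    simp only [List.length_take, lt_min_iff] at hs
    rw [stepOf_eq_of_mem hW hs.2 hj]
    exact hs.1
  · intro ht
    have hlt := stepOf_lt_length hW j
    refine ⟨W[stepOf W j], ?_, mem_getElem_stepOf hW j⟩
    have : (W.take t)[stepOf W j]'(by simp; omega) = W[stepOf W j] := List.getElem_take ..
    exact this ▸ List.getElem_mem _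
end Lemmas
section Lower
variable {m : ℕ}

/-- Partial run: apply the first `t` blocks. -/
def runPart (F' : Conf m → Conf m) (W' : List (Finset (Fin m))) (t : ℕ) (z : Conf m) : Conf m :=
  (W'.take t).foldl (fun y B => updSet F' B y) z

lemma runPart_zero (F' : Conf m → Conf m) (W' : List (Finset (Fin m))) (z : Conf m) :
    runPart F' W' 0 z = z := rfl

lemma runPart_length (F' : Conf m → Conf m) (W' : List (Finset (Fin m))) (z : Conf m) :
    runPart F' W' W'.length z = runSched F' W' z := by
  unfold runPart runSched; rw [List.take_length]

lemma runPart_succ (F' : Conf m → Conf m) {W' : List (Finset (Fin m))} {t : ℕ}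
    (ht : t < W'.length) (z : Conf m) :
    runPart F' W' (t + 1) z = updSet F' (W'[t]'ht) (runPart F' W' t z) := by
  unfold runPart
  rw [List.take_succ, List.getElem?_eq_getElem ht]
  rw [List.foldl_append]
  rfl

lemma runPart_frozen {F' : Conf m → Conf m} {W' : List (Finset (Fin m))}
    (hW' : isSchedule W') (z : Conf m) (i : Fin m) {t : ℕ} (ht : t ≤ stepOf W' i) :
    runPart F' W' t z i = z i := by
  induction t with
  | zero => rfl
  | succ t ih =>
      have hlt : t < W'.length := lt_of_lt_of_le (by omega) (le_of_lt (stepOf_lt_length hW' i))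
      rw [runPart_succ F' hlt]
      have hni : i ∉ W'[t] := fun hmem => by
        have := stepOf_eq_of_mem hW' hlt hmem; omega
      simp only [updSet, hni, if_neg, ite_false]
      exact ih (by omega)

lemma runPart_stable {F' : Conf m → Conf m} {W' : List (Finset (Fin m))}
    (hW' : isSchedule W') (z : Conf m) (i : Fin m) {t : ℕ}
    (ht1 : stepOf W' i < t) (ht2 : t ≤ W'.length) :
    runPart F' W' t z i = runPart F' W' (stepOf W' i + 1) z i := by
  induction t with
  | zero => omega
  | succ t ih =>
      rcases eq_or_lt_of_le (Nat.succ_le_of_lt ht1) with h | h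
      · rw [show t + 1 = stepOf W' i + 1 by omega]
      · have hlt : t < W'.length := by omega
        rw [runPart_succ F' hlt]
        have hni : i ∉ W'[t] := fun hmem => by
          have := stepOf_eq_of_mem hW' hlt hmem; omega
        simp only [updSet, hni, if_neg, ite_false]
        exact ih (by omega) (by omega)

lemma runPart_eq {F' : Conf m → Conf m} {W' : List (Finset (Fin m))}
    (hW' : isSchedule W') (z : Conf m) (i : Fin m) {t : ℕ} (ht : t ≤ W'.length) :
    runPart F' W' t z i =
      if stepOf W' i < t then runSched F' W' z i else z i := by
  split_ifs with hc
  · rw [runPart_stable hW' z i hc ht, ← runPart_length F' W' z,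
      runPart_stable hW' z i (stepOf_lt_length hW' i) le_rfl]
  · exact runPart_frozen hW' z i (by omega)

end Lower
section LB
variable {n k : ℕ}

noncomputable def liftConf (h : Fin n → Fin (n + k)) (x : Conf n) : Conf (n + k) :=
  fun i => if hi : ∃ j, h j = i then x (Classical.choose hi) else false

lemma liftConf_h {h : Fin n → Fin (n + k)} (hinj : Function.Injective h) (x : Conf n)
    (j : Fin n) : liftConf h x (h j) = x j := by
  unfold liftConf
  have hi : ∃ j', h j' = h j := ⟨j, rfl⟩
  rw [dif_pos hi]
  congr 1
  exact hinj (Classical.choose_spec hi)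

lemma liftConf_not {h : Fin n → Fin (n + k)} (x : Conf n) (i : Fin (n + k))
    (hi : ∀ j, h j ≠ i) : liftConf h x i = false := by
  unfold liftConf
  rw [dif_neg]
  rintro ⟨j, hj⟩
  exact hi j hj

lemma lower_colorable {F : Conf n → Conf n} {W : List (Finset (Fin n))} (hW : isSchedule W)
    {h : Fin n → Fin (n + k)} (hinj : Function.Injective h)
    {W' : List (Finset (Fin (n + k)))} (hW' : isSchedule W') (hext : extendsSched W W' h)
    {F' : Conf (n + k) → Conf (n + k)} (hsim : simulates F' W' F h) :
    (gnecc F W).Colorable (2 ^ k) := by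
  classical
  have cardsub : Fintype.card {i : Fin (n + k) // ∀ j, h j ≠ i} = k := by
    have e1 : {i : Fin (n + k) // ∀ j, h j ≠ i} ≃ {i : Fin (n + k) // ¬ ∃ j, h j = i} :=
      Equiv.subtypeEquivRight (fun i => by push_neg; rfl)
    have c1 : Fintype.card {i : Fin (n + k) // ∃ j, h j = i} = n := by
      have e2 : {i : Fin (n + k) // ∃ j, h j = i} ≃ Fin n :=
        (Equiv.subtypeEquivRight fun i => Set.mem_range.symm).trans
          (Equiv.ofInjective h hinj).symm
      rw [Fintype.card_congr e2, Fintype.card_fin]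
    rw [Fintype.card_congr e1, Fintype.card_subtype_compl, c1, Fintype.card_fin]
    omega
  have cardβ : Fintype.card ({i : Fin (n + k) // ∀ j, h j ≠ i} → Bool) = 2 ^ k := by
    rw [Fintype.card_fun, Fintype.card_bool, cardsub]
  rw [← cardβ]
  -- the coloring
  refine (SimpleGraph.Coloring.mk
    (fun x => fun i => runSched F' W' (liftConf h x) i.1) ?_).colorable
  intro x x' hadj hc
  obtain ⟨hne, i, hip, hcf⟩ := hadj
  apply hne
  have hzx : (fun j => liftConf h x (h j)) = x := funext (liftConf_h hinj x)
  have hzx' : (fun j => liftConf h x' (h j)) = x' := funext (liftConf_h hinj x')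
  have e1 : ∀ j, runSched F' W' (liftConf h x) (h j) = F x j := by
    intro j
    have := congrFun (hsim (liftConf h x)) j
    rwa [hzx] at this
  have e1' : ∀ j, runSched F' W' (liftConf h x') (h j) = F x' j := by
    intro j
    have := congrFun (hsim (liftConf h x')) j
    rwa [hzx'] at this
  have key : ∀ j : Fin n, (stepOf W j < i → F x j = F x' j) ∧ (i ≤ stepOf W j → x j = x' j) := by
    intro j
    have hthis := congrFun hcf j
    simp only [updSet] at hthis
    by_cases hj : j ∈ prefUnion W i
    · rw [if_pos hj, if_pos hj] at hthis
      rw [mem_prefUnion_iff hW] at hj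
      exact ⟨fun _ => hthis, fun hle => absurd hj (by omega)⟩
    · rw [if_neg hj, if_neg hj] at hthis
      rw [mem_prefUnion_iff hW] at hj
      exact ⟨fun hlt => absurd hlt hj, fun _ => hthis⟩
  by_cases hJ : ∃ j : Fin n, stepOf W j < i
  · obtain ⟨j₁, hj₁⟩ := hJ
    set J : Finset (Fin n) := Finset.univ.filter (fun j => stepOf W j < i) with hJdef
    have hj₁J : j₁ ∈ J := by simp [hJdef, hj₁]
    have hJne : (J.image (fun j => stepOf W' (h j))).Nonempty :=
      ⟨_, Finset.mem_image_of_mem _ hj₁J⟩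
    set M := (J.image fun j => stepOf W' (h j)).max' hJne with hM
    obtain ⟨j₀, hj₀J, hj₀M⟩ : ∃ j₀ ∈ J, stepOf W' (h j₀) = M := by
      obtain ⟨y, hy, hy2⟩ := Finset.mem_image.1 ((J.image _).max'_mem hJne)
      exact ⟨y, hy, hy2⟩
    have hj₀i : stepOf W j₀ < i := by simpa [hJdef] using hj₀J
    have ht₀le : M + 1 ≤ W'.length := by
      have := stepOf_lt_length hW' (h j₀); omega
    have hA : runPart F' W' (M + 1) (liftConf h x) = runPart F' W' (M + 1) (liftConf h x') := by
      funext i'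
      rw [runPart_eq hW' _ _ ht₀le, runPart_eq hW' _ _ ht₀le]
      by_cases hr : ∃ j, h j = i'
      · obtain ⟨j, rfl⟩ := hr
        split_ifs with hlt
        · have hle : stepOf W j ≤ stepOf W j₀ := (hext j j₀).2 (by omega)
          rw [e1 j, e1' j]
          exact (key j).1 (by omega)
        · rw [liftConf_h hinj, liftConf_h hinj]
          apply (key j).2
          by_contra hlt2
          push_neg at hlt2
          have hjJ : j ∈ J := by simp [hJdef]; omega
          have hle2 : stepOf W' (h j) ≤ M :=
            Finset.le_max' _ _ (Finset.mem_image_of_mem (fun j => stepOf W' (h j)) hjJ)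
          omega
      · push_neg at hr
        split_ifs with hlt
        · exact congrFun hc ⟨i', hr⟩
        · rw [liftConf_not x i' hr, liftConf_not x' i' hr]
    have hprop : ∀ d, M + 1 + d ≤ W'.length →
        runPart F' W' (M + 1 + d) (liftConf h x) = runPart F' W' (M + 1 + d) (liftConf h x') := by
      intro d
      induction d with
      | zero => intro _; exact hA
      | succ d ih =>
          intro hd
          rw [show M + 1 + (d + 1) = (M + 1 + d) + 1 by ring]
          rw [runPart_succ F' (by omega), runPart_succ F' (by omega), ih (by omega)]
    have hend := hprop (W'.length - (M + 1)) (by omega)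
    rw [show M + 1 + (W'.length - (M + 1)) = W'.length by omega, runPart_length,
      runPart_length] at hend
    funext j
    rw [← e1 j, ← e1' j, hend]
  · push_neg at hJ
    have hxx : x = x' := funext fun j => (key j).2 (hJ j)
    rw [hxx]
end LB
section UB
variable {n k : ℕ}

lemma natAdd_inj : Function.Injective (Fin.natAdd n : Fin k → Fin (n + k)) := by
  intro a b hab
  have : n + (a : ℕ) = n + (b : ℕ) := congrArg Fin.val hab
  exact Fin.ext (by omega)

/-- Embedding of the original automata. -/
def castEmb (n k : ℕ) : Fin n ↪ Fin (n + k) := ⟨Fin.castAdd k, Fin.castAdd_injective n k⟩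

/-- Embedding of the extra automata. -/
def natEmb (n k : ℕ) : Fin k ↪ Fin (n + k) := ⟨Fin.natAdd n, natAdd_inj⟩

lemma findIdx_map {α β : Type*} (f : α → β) (p : β → Bool) (l : List α) :
    (l.map f).findIdx p = l.findIdx (p ∘ f) := by
  induction l with
  | nil => rfl
  | cons a l ih => simp [List.findIdx_cons, ih]

/-- The simulating network. -/
noncomputable def simF (F : Conf n → Conf n) (W : List (Finset (Fin n)))
    (C : Conf n → Conf k) : Conf (n + k) → Conf (n + k) :=
  fun y i =>
    if hi : (i : ℕ) < n then
      (if hx : ∃ x₀ : Conf n, C x₀ = (fun e => y (Fin.natAdd n e)) ∧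
          updSet F (prefUnion W (stepOf W ⟨(i : ℕ), hi⟩)) x₀ = (fun j => y (Fin.castAdd k j))
        then F (Classical.choose hx) ⟨(i : ℕ), hi⟩ else false)
    else C (fun j => y (Fin.castAdd k j)) ⟨(i : ℕ) - n, by have := i.isLt; omega⟩

lemma simF_apply_cast (F : Conf n → Conf n) (W : List (Finset (Fin n)))
    (C : Conf n → Conf k) (y : Conf (n + k)) (j : Fin n) :
    simF F W C y (Fin.castAdd k j) =
      if hx : ∃ x₀ : Conf n, C x₀ = (fun e => y (Fin.natAdd n e)) ∧
          updSet F (prefUnion W (stepOf W j)) x₀ = (fun j' => y (Fin.castAdd k j'))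
        then F (Classical.choose hx) j else false := by
  unfold simF
  rw [dif_pos (show ((Fin.castAdd k j : Fin (n + k)) : ℕ) < n from j.isLt)]
  simp only [Fin.coe_castAdd, Fin.eta]

lemma simF_apply_nat (F : Conf n → Conf n) (W : List (Finset (Fin n)))
    (C : Conf n → Conf k) (y : Conf (n + k)) (e : Fin k) :
    simF F W C y (Fin.natAdd n e) = C (fun j => y (Fin.castAdd k j)) e := by
  unfold simF
  rw [dif_neg (show ¬ ((Fin.natAdd n e : Fin (n + k)) : ℕ) < n by simp)]
  congr 1
  exact Fin.ext (by simp)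

lemma simRun (F : Conf n → Conf n) {W : List (Finset (Fin n))} (hW : isSchedule W)
    (C : Conf n → Conf k)
    (hC : ∀ x x', C x = C x' → confusable F W x x' → F x = F x')
    (V P : List (Finset (Fin n))) (hWP : W = P ++ V) (x : Conf n) (z : Conf (n + k))
    (inv1 : ∀ j, z (Fin.castAdd k j) = updSet F (prefUnion W P.length) x j)
    (inv2 : ∀ e, z (Fin.natAdd n e) = C x e) :
    (∀ j, (V.map (fun B => B.map (castEmb n k))).foldl
        (fun y B => updSet (simF F W C) B y) z (Fin.castAdd k j) = F x j)
    ∧ (∀ e, (V.map (fun B => B.map (castEmb n k))).foldl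
        (fun y B => updSet (simF F W C) B y) z (Fin.natAdd n e) = C x e) := by
  induction V generalizing P z with
  | nil =>
      have hPW : P.length = W.length := by rw [hWP]; simp
      constructor
      · intro j
        have := inv1 j
        rw [hPW, prefUnion_length hW, updSet_univ] at this
        simpa using this
      · intro e
        simpa using inv2 e
  | cons B V' ih =>
      have hWP' : W = (P ++ [B]) ++ V' := by rw [hWP]; simp
      set z' := updSet (simF F W C) (B.map (castEmb n k)) z with hz'
      have hpre : prefUnion W (P.length + 1) = prefUnion W P.length ∪ B := by
        unfold prefUnion
        have h1 : W.take P.length = P := by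
          rw [hWP]; exact List.take_left (l₁ := P) (l₂ := B :: V')
        have h2 : W.take (P.length + 1) = P ++ [B] := by
          rw [hWP']
          have := List.take_left (l₁ := P ++ [B]) (l₂ := V')
          simpa using this
        rw [h1, h2, foldr_union_append]
        simp
      have hlenP : P.length < W.length := by rw [hWP]; simp
      have hgetP : W[P.length]'hlenP = B := by
        subst hWP
        rw [List.getElem_append_right (le_refl P.length)]
        simp
      have inv2' : ∀ e, z' (Fin.natAdd n e) = C x e := by
        intro e
        rw [hz']
        have hni : Fin.natAdd n e ∉ B.map (castEmb n k) := by
          rw [Finset.mem_map]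
          rintro ⟨b, _, hb⟩
          have : (b : ℕ) = n + e := congrArg Fin.val hb
          have := b.isLt; omega
        simp only [updSet, hni, ite_false]
        exact inv2 e
      have inv1' : ∀ j, z' (Fin.castAdd k j) = updSet F (prefUnion W (P.length + 1)) x j := by
        intro j
        rw [hz']
        by_cases hj : j ∈ B
        · have hmem : Fin.castAdd k j ∈ B.map (castEmb n k) := Finset.mem_map' _ |>.2 hj
          simp only [updSet, hmem, ite_true]
          rw [simF_apply_cast]
          have hstep : stepOf W j = P.length := stepOf_eq_of_mem hW hlenP (hgetP ▸ hj)
          have hx : ∃ x₀ : Conf n, C x₀ = (fun e => z (Fin.natAdd n e)) ∧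
              updSet F (prefUnion W (stepOf W j)) x₀ = (fun j' => z (Fin.castAdd k j')) := by
            refine ⟨x, ?_, ?_⟩
            · funext e; exact (inv2 e).symm
            · funext j'; rw [hstep]; exact (inv1 j').symm
          rw [dif_pos hx]
          obtain ⟨hc1, hc2⟩ := Classical.choose_spec hx
          have hcc : confusable F W (Classical.choose hx) x := by
            refine ⟨stepOf W j, by omega, ?_⟩
            rw [hc2]
            funext j'
            rw [hstep]
            exact inv1 j'
          have hFeq : F (Classical.choose hx) = F x := by
            apply hC
            · rw [hc1]; funext e; exact inv2 e
            · exact hcc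
          rw [hFeq]
          have hjmem : j ∈ prefUnion W (P.length + 1) := by
            rw [hpre]; exact Finset.mem_union_right _ hj
          simp only [updSet, hjmem, ite_true]
        · have hmem : Fin.castAdd k j ∉ B.map (castEmb n k) := fun hm =>
            hj ((Finset.mem_map' _).1 hm)
          simp only [updSet, hmem, ite_false]
          rw [inv1 j]
          simp only [updSet, hpre, Finset.mem_union, hj, or_false]
      have := ih (P ++ [B]) hWP' z' (by simpa using inv1') inv2'
      simp only [List.map_cons, List.foldl_cons]
      exact this
end UB
section UB2
variable {n k : ℕ}

lemma foldr_union_map (W : List (Finset (Fin n))) :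
    (W.map (fun B => B.map (castEmb n k))).foldr (· ∪ ·) ∅ =
      (W.foldr (· ∪ ·) ∅).map (castEmb n k) := by
  induction W with
  | nil => simp
  | cons B l ih => simp [ih, Finset.map_union]

lemma cast_notmem_extras (j : Fin n) :
    Fin.castAdd k j ∉ Finset.univ.map (natEmb n k) := by
  rw [Finset.mem_map]
  rintro ⟨e, _, he⟩
  have : n + (e : ℕ) = (j : ℕ) := congrArg Fin.val he
  have := j.isLt; omega

lemma nat_notmem_map (e : Fin k) (B : Finset (Fin n)) :
    Fin.natAdd n e ∉ B.map (castEmb n k) := by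
  rw [Finset.mem_map]
  rintro ⟨b, _, hb⟩
  have : (b : ℕ) = n + e := congrArg Fin.val hb
  have := b.isLt; omega

lemma stepOf_mapW (W : List (Finset (Fin n))) (j : Fin n) :
    stepOf (W.map (fun B => B.map (castEmb n k))) (Fin.castAdd k j) = stepOf W j := by
  unfold stepOf
  rw [findIdx_map]
  congr 1
  funext B
  simp only [Function.comp]
  exact decide_eq_decide.mpr (Finset.mem_map' (castEmb n k))

lemma upper_mem (F : Conf n → Conf n) {W : List (Finset (Fin n))} (hW : isSchedule W)
    (C : Conf n → Conf k)
    (hC : ∀ x x', C x = C x' → confusable F W x x' → F x = F x') :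
    ∃ h : Fin n → Fin (n + k), Function.Injective h ∧
    ∃ W' : List (Finset (Fin (n + k))), isSchedule W' ∧ extendsSched W W' h ∧
      ∃ F' : Conf (n + k) → Conf (n + k), simulates F' W' F h := by
  classical
  refine ⟨Fin.castAdd k, Fin.castAdd_injective n k, ?_⟩
  set extras : Finset (Fin (n + k)) := Finset.univ.map (natEmb n k) with hex
  set mapW : List (Finset (Fin (n + k))) := W.map (fun B => B.map (castEmb n k)) with hmW
  refine ⟨(if k = 0 then [] else [extras]) ++ mapW, ⟨?_, ?_, ?_⟩, ?_, simF F W C, ?_⟩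
  · -- nonempty blocks
    intro B' hB'
    rcases List.mem_append.1 hB' with h1 | h2
    · by_cases hk : k = 0
      · rw [if_pos hk] at h1; exact absurd h1 List.not_mem_nil
      · rw [if_neg hk] at h1
        rcases List.mem_singleton.1 h1 with rfl
        exact ⟨natEmb n k ⟨0, Nat.pos_of_ne_zero hk⟩,
          Finset.mem_map_of_mem _ (Finset.mem_univ _)⟩
    · rw [hmW, List.mem_map] at h2
      obtain ⟨B, hB, rfl⟩ := h2
      obtain ⟨b, hb⟩ := hW.1 B hB
      exact ⟨castEmb n k b, Finset.mem_map_of_mem _ hb⟩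
  · -- pairwise disjoint
    rw [List.pairwise_append]
    refine ⟨by split <;> simp, ?_, ?_⟩
    · rw [hmW]
      exact List.Pairwise.map _ (fun a b hd => (Finset.disjoint_map _).2 hd) hW.2.1
    · intro a ha b hb
      by_cases hk : k = 0
      · rw [if_pos hk] at ha; exact absurd ha List.not_mem_nil
      · rw [if_neg hk] at ha
        rcases List.mem_singleton.1 ha with rfl
        rw [hmW, List.mem_map] at hb
        obtain ⟨B, _, rfl⟩ := hb
        rw [Finset.disjoint_left]
        intro i hi hib
        rw [hex, Finset.mem_map] at hi
        obtain ⟨e, _, rfl⟩ := hi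
        exact nat_notmem_map e B hib
  · -- union = univ
    rw [foldr_union_append, hmW, foldr_union_map, hW.2.2]
    ext i
    simp only [Finset.mem_union, Finset.mem_univ, iff_true]
    by_cases hi : (i : ℕ) < n
    · right
      rw [Finset.mem_map]
      exact ⟨⟨(i : ℕ), hi⟩, Finset.mem_univ _, Fin.ext rfl⟩
    · left
      have hk : k ≠ 0 := by have := i.isLt; omega
      rw [if_neg hk]
      have : i ∈ extras := by
        rw [hex, Finset.mem_map]
        exact ⟨⟨(i : ℕ) - n, by have := i.isLt; omega⟩, Finset.mem_univ _,
          Fin.ext (by simp [natEmb]; omega)⟩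
      simpa using this
  · -- extendsSched
    have hstep : ∀ j : Fin n,
        stepOf ((if k = 0 then [] else [extras]) ++ mapW) (Fin.castAdd k j) =
          (if k = 0 then 0 else 1) + stepOf W j := by
      intro j
      by_cases hk : k = 0
      · rw [if_pos hk, if_pos hk, List.nil_append, hmW, stepOf_mapW, Nat.zero_add]
      · rw [if_neg hk, if_neg hk]
        show stepOf (extras :: mapW) (Fin.castAdd k j) = 1 + stepOf W j
        unfold stepOf
        rw [List.findIdx_cons]
        have : (decide (Fin.castAdd k j ∈ extras)) = false := by
          simp only [decide_eq_false_iff_not]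
          exact cast_notmem_extras j
        rw [this]
        show (stepOf mapW (Fin.castAdd k j)) + 1 = 1 + stepOf W j
        rw [hmW, stepOf_mapW]; omega
    intro i i'
    rw [hstep i, hstep i']
    constructor <;> intro <;> omega
  · -- simulates
    intro z
    set x : Conf n := fun j => z (Fin.castAdd k j) with hx
    have inv1 : ∀ j, z (Fin.castAdd k j) = updSet F (prefUnion W 0) x j := by
      intro j; simp [prefUnion, updSet, hx]
    by_cases hk : k = 0
    · have hmain := simRun F hW C hC W [] rfl x z inv1
        (fun e => absurd e.isLt (by omega))
      funext i
      show runSched (simF F W C) _ z (Fin.castAdd k i) = F x i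
      rw [if_pos hk, List.nil_append]
      exact hmain.1 i
    · set z₁ := updSet (simF F W C) extras z with hz₁
      have inv1' : ∀ j, z₁ (Fin.castAdd k j) = updSet F (prefUnion W 0) x j := by
        intro j
        rw [hz₁]
        simp only [updSet, hex, cast_notmem_extras j, ite_false]
        exact inv1 j
      have inv2' : ∀ e, z₁ (Fin.natAdd n e) = C x e := by
        intro e
        rw [hz₁]
        have hmem : Fin.natAdd n e ∈ extras := by
          rw [hex]; exact Finset.mem_map_of_mem _ (Finset.mem_univ _)
        simp only [updSet, hmem, ite_true]
        rw [simF_apply_nat]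
      have hmain := simRun F hW C hC W [] rfl x z₁ inv1' inv2'
      funext i
      show runSched (simF F W C) _ z (Fin.castAdd k i) = F x i
      rw [if_neg hk]
      show (List.foldl (fun y B => updSet (simF F W C) B y) z (extras :: mapW))
          (Fin.castAdd k i) = F x i
      rw [List.foldl_cons]
      exact hmain.1 i
end UB2
theorem stmt2 {n : ℕ} (F : Conf n → Conf n) (W : List (Finset (Fin n)))
    (hW : isSchedule W) :
    kappa F W = Nat.clog 2 ((gnecc F W).chromaticNumber.toNat) := by
  classical
  have hcol : (gnecc F W).Colorable ((gnecc F W).chromaticNumber.toNat) :=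
    (gnecc F W).colorable_chromaticNumber_of_fintype
  set N := (gnecc F W).chromaticNumber.toNat with hN
  set K := Nat.clog 2 N with hK
  have hmem : K ∈ {k | ∃ h : Fin n → Fin (n + k), Function.Injective h ∧
      ∃ W' : List (Finset (Fin (n + k))), isSchedule W' ∧ extendsSched W W' h ∧
        ∃ F' : Conf (n + k) → Conf (n + k), simulates F' W' F h} := by
    have h2 : N ≤ 2 ^ K := Nat.le_pow_clog one_lt_two N
    have hcol2 : (gnecc F W).Colorable (2 ^ K) := hcol.mono h2
    obtain ⟨C0⟩ := hcol2
    have hcard : Fintype.card (Fin (2 ^ K)) ≤ Fintype.card (Conf K) := by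
      simp [Fintype.card_fun]
    obtain ⟨emb⟩ := Function.Embedding.nonempty_of_card_le hcard
    set C1 := (gnecc F W).recolorOfEmbedding emb C0 with hC1
    apply upper_mem F hW (fun x => C1 x)
    intro x x' hcx hconf
    by_contra hne
    exact (C1.valid ⟨hne, hconf⟩) hcx
  unfold kappa
  apply le_antisymm
  · exact Nat.sInf_le hmem
  · apply le_csInf ⟨_, hmem⟩
    rintro k' ⟨h, hinj, W', hW', hext, F', hsim⟩
    have hc2 := lower_colorable hW hinj hW' hext hsim
    have hle : (gnecc F W).chromaticNumber ≤ ((2 ^ k' : ℕ) : ℕ∞) :=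
      hc2.chromaticNumber_le
    have hN2 : N ≤ 2 ^ k' := by
      have := ENat.toNat_le_toNat hle (ENat.coe_ne_top _)
      rw [ENat.toNat_natCast] at this; exact this
    exact (Nat.clog_le_iff_le_pow one_lt_two).2 hN2
end

section
/- For a BAN F and block-sequential update schedule W with p blocks, for any pair of configurations x, x' that are confusable, the set CC(x,x') = {i ∈ [0,p] : F_{W_{<i}}(x) = F_{W_{<i}}(x')} is an integer interval; i.e., if a = min CC(x,x') and b = max CC(x,x'), then CC(x,x') = [a, b]. -/
theorem stmt9 {n : ℕ} (F : Conf n → Conf n) (W : List (Finset (Fin n)))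
    (hW : isSchedule W) (x x' : Conf n) (h : (CCset F W x x').Nonempty) :
    CCset F W x x' = Set.Icc (sInf (CCset F W x x')) (sSup (CCset F W x x')) := by
  have hmem : ∀ (L : List (Finset (Fin n))) (a : Fin n),
      a ∈ L.foldr (· ∪ ·) ∅ ↔ ∃ B ∈ L, a ∈ B := by
    intro L a
    induction L with
    | nil => simp
    | cons B L ih => simp [ih]
  have hmono : ∀ i j : ℕ, i ≤ j → prefUnion W i ⊆ prefUnion W j := by
    intro i j hij a ha
    rw [prefUnion, hmem] at ha ⊢
    obtain ⟨B, hB, haB⟩ := ha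
    refine ⟨B, ?_, haB⟩
    have : W.take i = (W.take j).take i := by
      rw [List.take_take, min_eq_left hij]
    rw [this] at hB
    exact List.mem_of_mem_take hB
  have hbdd : BddAbove (CCset F W x x') := ⟨W.length, fun i hi => hi.1⟩
  apply Set.eq_of_subset_of_subset
  · intro i hi
    exact ⟨Nat.sInf_le hi, le_csSup hbdd hi⟩
  · rintro j ⟨hja, hjb⟩
    have ha : sInf (CCset F W x x') ∈ CCset F W x x' := Nat.sInf_mem h
    have hb : sSup (CCset F W x x') ∈ CCset F W x x' := Nat.sSup_mem h hbdd
    refine ⟨le_trans hjb hb.1, ?_⟩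
    funext k
    by_cases hk : k ∈ prefUnion W j
    · have hk' : k ∈ prefUnion W (sSup (CCset F W x x')) := hmono _ _ hjb hk
      have := congrFun hb.2 k
      simp only [updSet, if_pos hk'] at this
      simp only [updSet, if_pos hk, this]
    · have hk' : k ∉ prefUnion W (sInf (CCset F W x x')) :=
        fun hmem' => hk (hmono _ _ hja hmem')
      have := congrFun ha.2 k
      simp only [updSet, if_neg hk'] at this
      simp only [updSet, if_neg hk, this]
end

section
/- Let x, x', x'' ∈ B^n with CC(x,x') ≠ ∅ and CC(x,x'') ≠ ∅. Then CC(x,x') ∩ CC(x,x'') ≠ ∅ if and only if CC(x',x'') ≠ ∅. -/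
lemma foldr_union_mem {n : ℕ} (L : List (Finset (Fin n))) (a : Fin n) :
    a ∈ L.foldr (· ∪ ·) ∅ ↔ ∃ B ∈ L, a ∈ B := by
  induction L with
  | nil => simp
  | cons B L ih => simp [ih]

lemma prefUnion_mono {n : ℕ} (W : List (Finset (Fin n))) {j k : ℕ} (h : j ≤ k) :
    prefUnion W j ⊆ prefUnion W k := by
  intro a ha
  rw [prefUnion, foldr_union_mem] at *
  obtain ⟨B, hB, haB⟩ := ha
  refine ⟨B, ?_, haB⟩
  have heq : W.take j = (W.take k).take j := by
    rw [List.take_take, Nat.min_eq_left h]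
  rw [heq] at hB
  exact List.take_subset _ _ hB

lemma updSet_eq_iff {n : ℕ} (F : Conf n → Conf n) (I : Finset (Fin n)) (y y' : Conf n) :
    updSet F I y = updSet F I y' ↔
      ∀ k, (k ∈ I → F y k = F y' k) ∧ (k ∉ I → y k = y' k) := by
  constructor
  · intro h k
    have hk := congrFun h k
    by_cases hkI : k ∈ I
    · simp [updSet, hkI] at hk
      exact ⟨fun _ => hk, fun h' => absurd hkI h'⟩
    · simp [updSet, hkI] at hk
      exact ⟨fun h' => absurd h' hkI, fun _ => hk⟩
  · intro h
    funext k
    by_cases hkI : k ∈ I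
    · simp [updSet, hkI]; exact (h k).1 hkI
    · simp [updSet, hkI]; exact (h k).2 hkI

lemma key_stmt11 {n : ℕ} (F : Conf n → Conf n) (W : List (Finset (Fin n)))
    (x x' x'' : Conf n) {a b c : ℕ}
    (ha : a ∈ CCset F W x x') (hb : b ∈ CCset F W x x'')
    (hc : c ∈ CCset F W x' x'') (hab : a ≤ b) :
    (CCset F W x x' ∩ CCset F W x x'').Nonempty := by
  obtain ⟨hale, haeq⟩ := ha
  obtain ⟨hble, hbeq⟩ := hb
  obtain ⟨hcle, hceq⟩ := hc
  rw [updSet_eq_iff] at haeq hbeq hceq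
  rcases le_total c a with hca | hac
  · -- j = a
    refine ⟨a, ⟨hale, ?_⟩, hale, ?_⟩
    · rw [updSet_eq_iff]; intro k; exact haeq k
    · rw [updSet_eq_iff]
      intro k
      constructor
      · intro hk
        exact (hbeq k).1 (prefUnion_mono W hab hk)
      · intro hk
        have h1 := (haeq k).2 hk
        have h2 := (hceq k).2 (fun h' => hk (prefUnion_mono W hca h'))
        exact h1.trans h2
  · rcases le_total c b with hcb | hbc
    · -- j = c
      have hcle' : c ≤ W.length := le_trans hcb hble
      refine ⟨c, ⟨hcle', ?_⟩, hcle', ?_⟩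
      · rw [updSet_eq_iff]
        intro k
        constructor
        · intro hk
          have h1 := (hbeq k).1 (prefUnion_mono W hcb hk)
          have h2 := (hceq k).1 hk
          exact h1.trans h2.symm
        · intro hk
          exact (haeq k).2 (fun h' => hk (prefUnion_mono W hac h'))
      · rw [updSet_eq_iff]
        intro k
        constructor
        · intro hk
          exact (hbeq k).1 (prefUnion_mono W hcb hk)
        · intro hk
          have h1 := (haeq k).2 (fun h' => hk (prefUnion_mono W hac h'))
          have h2 := (hceq k).2 hk
          exact h1.trans h2
    · -- j = b
      refine ⟨b, ⟨hble, ?_⟩, hble, ?_⟩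
      · rw [updSet_eq_iff]
        intro k
        constructor
        · intro hk
          have h1 := (hbeq k).1 hk
          have h2 := (hceq k).1 (prefUnion_mono W hbc hk)
          exact h1.trans h2.symm
        · intro hk
          exact (haeq k).2 (fun h' => hk (prefUnion_mono W hab h'))
      · rw [updSet_eq_iff]; intro k; exact hbeq k

theorem stmt11 {n : ℕ} (F : Conf n → Conf n) (W : List (Finset (Fin n)))
    (hW : isSchedule W) (x x' x'' : Conf n)
    (h1 : (CCset F W x x').Nonempty) (h2 : (CCset F W x x'').Nonempty) :
    (CCset F W x x' ∩ CCset F W x x'').Nonempty ↔ (CCset F W x' x'').Nonempty := by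
  constructor
  · rintro ⟨i, ⟨hile, hieq⟩, _, hieq'⟩
    exact ⟨i, hile, hieq.symm.trans hieq'⟩
  · rintro ⟨c, hc⟩
    obtain ⟨a, ha⟩ := h1
    obtain ⟨b, hb⟩ := h2
    rcases le_total a b with hab | hba
    · exact key_stmt11 F W x x' x'' ha hb hc hab
    · have hc' : c ∈ CCset F W x'' x' := ⟨hc.1, hc.2.symm⟩
      obtain ⟨j, hj1, hj2⟩ := key_stmt11 F W x x'' x' hb ha hc' hba
      exact ⟨j, hj2, hj1⟩
end

section
/- If F: B^n → B^n is bijective, then for the simple sequential update schedule W = ({0},...,{n-1}), every vertex of G_NECC(F,W) has degree at most 2^{⌈n/2⌉+1} − 2, hence χ(G_NECC(F,W)) ≤ 2^{⌈n/2⌉+1} − 1 and κ(F,W) ≤ n/2 + 1. -/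
open Classical in
theorem greedy_aux : ∀ (N : ℕ) (V : Type) [Fintype V] (G : SimpleGraph V) (d : ℕ),
    Fintype.card V = N → (∀ v, (G.neighborSet v).ncard < d) → G.Colorable d := by
  intro N
  induction N using Nat.strong_induction_on with
  | _ N ih =>
    intro V _ G d hcard hdeg
    rcases Nat.eq_zero_or_pos N with h0 | hpos
    · subst h0
      have : IsEmpty V := Fintype.card_eq_zero_iff.mp hcard
      exact ⟨⟨fun v => isEmptyElim v, fun {a} => isEmptyElim a⟩⟩
    · have : Nonempty V := Fintype.card_pos_iff.mp (hcard ▸ hpos)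
      obtain ⟨v0⟩ := this
      set V' := {w : V // w ≠ v0} with hV'
      let G' : SimpleGraph V' := G.comap Subtype.val
      have hcard' : Fintype.card V' = N - 1 := by
        have h1 : Fintype.card {w : V // ¬ (w = v0)} = Fintype.card V - Fintype.card {w : V // w = v0} :=
          Fintype.card_subtype_compl _
        have h2 : Fintype.card {w : V // w = v0} = 1 := Fintype.card_subtype_eq v0
        have h3 : Fintype.card V' = Fintype.card {w : V // ¬ (w = v0)} := Fintype.card_congr (Equiv.refl _)
        omega
      have hdeg' : ∀ v : V', (G'.neighborSet v).ncard < d := by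
        intro v
        refine lt_of_le_of_lt ?_ (hdeg v.val)
        refine Set.ncard_le_ncard_of_injOn Subtype.val ?_ ?_ (Set.toFinite _)
        · intro a ha; exact ha
        · exact fun a _ b _ h => Subtype.ext h
      obtain ⟨C⟩ := ih (N - 1) (by omega) V' G' d hcard' hdeg'
      -- colors used by neighbors of v0
      have hd0 : 0 < d := Nat.pos_of_ne_zero (by rintro rfl; exact Nat.not_lt_zero _ (hdeg v0))
      let Cext : V → Fin d := fun w => if hw : w = v0 then ⟨0, hd0⟩ else C ⟨w, hw⟩
      let S : Finset (Fin d) := ((G.neighborSet v0).toFinset).image Cext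
      have hS : S.card < d := by
        calc S.card ≤ (G.neighborSet v0).toFinset.card := Finset.card_image_le
        _ = (G.neighborSet v0).ncard := by rw [Set.ncard_eq_toFinset_card']
        _ < d := hdeg v0
      have : ∃ col : Fin d, col ∉ S := by
        by_contra hcon
        push_neg at hcon
        have : (Finset.univ : Finset (Fin d)) ⊆ S := fun col _ => hcon col
        have := Finset.card_le_card this
        simp at this
        omega
      obtain ⟨col, hcol⟩ := this
      refine ⟨⟨fun w => if hw : w = v0 then col else C ⟨w, hw⟩, ?_⟩⟩
      intro a b hab
      by_cases ha : a = v0 <;> by_cases hb : b = v0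
      · subst ha; subst hb; exact absurd hab (G.loopless.irrefl _)
      · subst ha
        simp only [dif_pos rfl, dif_neg hb]
        intro heq
        apply hcol
        have : b ∈ (G.neighborSet a).toFinset := by simpa using hab
        refine Finset.mem_image.mpr ⟨b, this, ?_⟩
        simp [Cext, dif_neg hb, ← heq]
      · subst hb
        simp only [dif_pos rfl, dif_neg ha]
        intro heq
        apply hcol
        have : a ∈ (G.neighborSet b).toFinset := by simpa using hab.symm
        refine Finset.mem_image.mpr ⟨a, this, ?_⟩
        simp [Cext, dif_neg ha, heq]
      · simp only [dif_neg ha, dif_neg hb]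
        exact C.valid (by exact hab)

theorem greedy {V : Type} [Fintype V] (G : SimpleGraph V) (d : ℕ)
    (hdeg : ∀ v, (G.neighborSet v).ncard < d) : G.Colorable d :=
  greedy_aux (Fintype.card V) V G d rfl hdeg

lemma mem_foldr_union_s16 {α : Type*} [DecidableEq α] (L : List (Finset α)) (x : α) :
    x ∈ L.foldr (· ∪ ·) ∅ ↔ ∃ B ∈ L, x ∈ B := by
  induction L with
  | nil => simp
  | cons B L ih => simp [ih]

lemma length_seqSched (n : ℕ) : (seqSched n).length = n := by simp [seqSched]

lemma mem_take_finRange {n j : ℕ} {i : Fin n} : i ∈ (List.finRange n).take j ↔ (i : ℕ) < j := by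
  constructor
  · intro h
    obtain ⟨idx, hidx, hget⟩ := List.getElem_of_mem h
    rw [List.length_take, List.length_finRange] at hidx
    rw [List.getElem_take] at hget
    have : ((List.finRange n)[idx]'(by rw [List.length_finRange]; omega) : ℕ) = idx := by simp
    rw [hget] at this
    omega
  · intro h
    have hin : (i : ℕ) < n := i.isLt
    have hlen : (i : ℕ) < ((List.finRange n).take j).length := by
      rw [List.length_take, List.length_finRange]; omega
    have : ((List.finRange n).take j)[(i:ℕ)]'hlen = i := by
      rw [List.getElem_take]; simp
    rw [← this]
    exact List.getElem_mem _

lemma mem_prefUnion_seq {n : ℕ} (j : ℕ) (i : Fin n) :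
    i ∈ prefUnion (seqSched n) j ↔ (i : ℕ) < j := by
  rw [prefUnion, mem_foldr_union_s16]
  unfold seqSched
  rw [← List.map_take]
  constructor
  · rintro ⟨B, hB, hiB⟩
    obtain ⟨i', hi', rfl⟩ := List.mem_map.mp hB
    rw [Finset.mem_singleton] at hiB
    subst hiB
    exact mem_take_finRange.mp hi'
  · intro h
    exact ⟨{i}, List.mem_map.mpr ⟨i, mem_take_finRange.mpr h, rfl⟩, Finset.mem_singleton_self i⟩

lemma updSet_seq_apply {n : ℕ} (F : Conf n → Conf n) (j : ℕ) (x : Conf n) (i : Fin n) :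
    updSet F (prefUnion (seqSched n) j) x i = if (i : ℕ) < j then F x i else x i := by
  rw [updSet]
  by_cases h : (i : ℕ) < j
  · rw [if_pos ((mem_prefUnion_seq j i).mpr h), if_pos h]
  · rw [if_neg (fun hm => h ((mem_prefUnion_seq j i).mp hm)), if_neg h]

/-- Auxiliary graph: `x ~ x'` if they agree on coordinates `≥ s` or their images agree on
coordinates `< t`. -/
def Hgr {n : ℕ} (F : Conf n → Conf n) (s t : ℕ) : SimpleGraph (Conf n) where
  Adj x x' := x ≠ x' ∧ ((∀ i : Fin n, s ≤ (i : ℕ) → x i = x' i) ∨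
    (∀ i : Fin n, (i : ℕ) < t → F x i = F x' i))
  symm := by
    constructor
    rintro x x' ⟨h1, h2⟩
    refine ⟨h1.symm, ?_⟩
    rcases h2 with h | h
    · exact Or.inl fun i hi => (h i hi).symm
    · exact Or.inr fun i hi => (h i hi).symm
  loopless := ⟨fun x h => h.1 rfl⟩

lemma Hgr_ncard {n : ℕ} (F : Conf n → Conf n) (hF : Function.Injective F) (s t : ℕ)
    (hs : s ≤ n) (x : Conf n) :
    ((Hgr F s t).neighborSet x).ncard ≤ 2 ^ s + 2 ^ (n - t) - 2 := by
  classical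
  set T : Set (Conf n) := {x' | ∀ i : Fin n, s ≤ (i : ℕ) → x i = x' i} with hT
  set U : Set (Conf n) := {x' | ∀ i : Fin n, (i : ℕ) < t → F x i = F x' i} with hU
  have hsub : (Hgr F s t).neighborSet x ⊆ (T \ {x}) ∪ (U \ {x}) := by
    rintro x' ⟨hne, h⟩
    rcases h with h | h
    · exact Or.inl ⟨h, fun hx => hne (by rw [Set.mem_singleton_iff] at hx; exact hx.symm)⟩
    · exact Or.inr ⟨h, fun hx => hne (by rw [Set.mem_singleton_iff] at hx; exact hx.symm)⟩
  have hTcard : T.ncard ≤ 2 ^ s := by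
    have := Set.ncard_le_ncard_of_injOn (s := T) (t := (Set.univ : Set (Fin s → Bool)))
      (fun x' : Conf n => fun i : Fin s => x' ⟨i, lt_of_lt_of_le i.isLt hs⟩)
      (fun a _ => Set.mem_univ _) ?_ (Set.finite_univ)
    · calc T.ncard ≤ (Set.univ : Set (Fin s → Bool)).ncard := this
        _ = 2 ^ s := by rw [Set.ncard_univ]; simp [Nat.card_eq_fintype_card]
    · intro a ha b hb hab
      funext i
      by_cases hi : s ≤ (i : ℕ)
      · rw [← ha i hi, ← hb i hi]
      · have : (i : ℕ) < s := by omega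
        exact congrFun hab ⟨(i : ℕ), this⟩
  have hUcard : U.ncard ≤ 2 ^ (n - t) := by
    have := Set.ncard_le_ncard_of_injOn (s := U) (t := (Set.univ : Set (Fin (n - t) → Bool)))
      (fun x' : Conf n => fun i : Fin (n - t) => F x' ⟨t + i, by omega⟩)
      (fun a _ => Set.mem_univ _) ?_ (Set.finite_univ)
    · calc U.ncard ≤ (Set.univ : Set (Fin (n - t) → Bool)).ncard := this
        _ = 2 ^ (n - t) := by rw [Set.ncard_univ]; simp [Nat.card_eq_fintype_card]
    · intro a ha b hb hab
      apply hF
      funext i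
      by_cases hi : (i : ℕ) < t
      · rw [← ha i hi, ← hb i hi]
      · have hilt : (i : ℕ) - t < n - t := by omega
        have := congrFun hab ⟨(i : ℕ) - t, hilt⟩
        simpa [show t + ((i : ℕ) - t) = (i : ℕ) by omega, Fin.eta] using this
  have hxT : x ∈ T := fun i _ => rfl
  have hxU : x ∈ U := fun i _ => rfl
  have hTfin : T.Finite := Set.toFinite _
  have hUfin : U.Finite := Set.toFinite _
  have h1 : (T \ {x}).ncard ≤ 2 ^ s - 1 := by
    rw [Set.ncard_diff_singleton_of_mem hxT]
    omega
  have h2 : (U \ {x}).ncard ≤ 2 ^ (n - t) - 1 := by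
    rw [Set.ncard_diff_singleton_of_mem hxU]
    omega
  calc ((Hgr F s t).neighborSet x).ncard ≤ ((T \ {x}) ∪ (U \ {x})).ncard :=
        Set.ncard_le_ncard hsub (Set.Finite.union (hTfin.diff) (hUfin.diff))
    _ ≤ (T \ {x}).ncard + (U \ {x}).ncard := Set.ncard_union_le _ _
    _ ≤ 2 ^ s + 2 ^ (n - t) - 2 := by
        have : 1 ≤ 2 ^ s := Nat.one_le_two_pow
        have : 1 ≤ 2 ^ (n - t) := Nat.one_le_two_pow
        omega

lemma gnecc_le_Hgr {n : ℕ} (F : Conf n → Conf n) :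
    gnecc F (seqSched n) ≤ Hgr F ((n + 1) / 2) ((n + 1) / 2) := by
  rintro x x' ⟨hne, i, hi, heq⟩
  rw [length_seqSched] at hi
  set m := (n + 1) / 2 with hm
  refine ⟨fun h => hne (by rw [h]), ?_⟩
  by_cases him : i ≤ m
  · left
    intro w hw
    have h1 := congrFun heq w
    rw [updSet_seq_apply, updSet_seq_apply, if_neg (by omega), if_neg (by omega)] at h1
    exact h1
  · right
    intro w hw
    have h1 := congrFun heq w
    rw [updSet_seq_apply, updSet_seq_apply, if_pos (by omega), if_pos (by omega)] at h1
    exact h1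

lemma findIdx_eq_of {α : Type*} (L : List α) (p : α → Bool) (j : ℕ) (hj : j < L.length)
    (hpj : p (L[j]) = true) (hlt : ∀ j' (h : j' < j), p (L[j']'(by omega)) = false) :
    L.findIdx p = j := by
  induction L generalizing j with
  | nil => simp at hj
  | cons a L ih =>
    cases j with
    | zero =>
      simp only [List.getElem_cons_zero] at hpj
      simp [List.findIdx_cons, hpj]
    | succ j =>
      have h0 : p a = false := hlt 0 (by omega)
      rw [List.findIdx_cons, h0]
      simp only [cond_false]
      have := ih j (by simpa using Nat.lt_of_succ_lt_succ hj) (by simpa using hpj)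
        (fun j' hj' => by simpa using hlt (j' + 1) (by omega))
      omega

lemma stepOf_seqSched {n : ℕ} (i : Fin n) : stepOf (seqSched n) i = (i : ℕ) := by
  apply findIdx_eq_of
  case hj => simp [seqSched]
  case hpj => simp [seqSched, Fin.ext_iff]
  case hlt =>
    intro j' hj'
    simp only [seqSched, List.getElem_map, List.getElem_finRange, decide_eq_false_iff_not,
      Finset.mem_singleton, Fin.ext_iff, Fin.coe_cast]
    omega

lemma kappa_le_zero (F : Conf 0 → Conf 0) : kappa F (seqSched 0) ≤ 0 / 2 + 1 := by
  apply Nat.sInf_le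
  refine ⟨fun i => i.elim0, fun i => i.elim0, [Finset.univ], ?_, fun i => i.elim0, id, ?_⟩
  · refine ⟨?_, ?_, ?_⟩
    · intro B hB
      simp only [List.mem_singleton] at hB
      subst hB
      exact Finset.univ_nonempty
    · simp
    · simp
  · intro z
    funext i
    exact i.elim0

section Main

variable {n : ℕ} (F : Conf n → Conf n)

/-- Projection to the original automata. -/
def proj (k : ℕ) (z : Conf (n + k)) : Conf n := fun j => z (Fin.castAdd k j)

/-- The blocks of the extended schedule. -/
def blocks (k : ℕ) (j : Fin n) : Finset (Fin (n + k)) :=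
  if (j : ℕ) = 0 then {Fin.castAdd k j} ∪ Finset.univ.image (Fin.natAdd n)
  else {Fin.castAdd k j}

lemma castAdd_mem_blocks {k : ℕ} (j i : Fin n) :
    Fin.castAdd k i ∈ blocks (n := n) k j ↔ i = j := by
  have hval : ∀ e : Fin k, Fin.castAdd k i ≠ Fin.natAdd n e := by
    intro e h
    have := congrArg Fin.val h
    simp [Fin.castAdd, Fin.natAdd, Fin.castLE] at this
    omega
  unfold blocks
  split
  · simp only [Finset.mem_union, Finset.mem_singleton, Finset.mem_image]
    constructor
    · rintro (h | ⟨e, _, he⟩)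
      · exact (Fin.castAdd_injective _ _) h
      · exact absurd he.symm (hval e)
    · rintro rfl; exact Or.inl rfl
  · simp only [Finset.mem_singleton]
    exact ⟨fun h => (Fin.castAdd_injective _ _) h, fun h => by rw [h]⟩

lemma natAdd_mem_blocks {k : ℕ} (j : Fin n) (e : Fin k) :
    Fin.natAdd n e ∈ blocks (n := n) k j ↔ (j : ℕ) = 0 := by
  have hval : Fin.natAdd n e ≠ Fin.castAdd k j := by
    intro h
    have := congrArg Fin.val h
    simp [Fin.castAdd, Fin.natAdd, Fin.castLE] at this
    omega
  unfold blocks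
  split
  · next h =>
    simp only [Finset.mem_union, Finset.mem_singleton, Finset.mem_image]
    exact iff_of_true (Or.inr ⟨e, Finset.mem_univ e, rfl⟩) h
  · next h =>
    simp only [Finset.mem_singleton]
    exact iff_of_false hval h

variable (C : (Hgr F (n/2) (n/2+1)).Coloring (Fin (2^(n/2+1))))

/-- The color map, encoded in `n/2+1` Boolean cells. -/
noncomputable def colc : Conf n → (Fin (n/2+1) → Bool) :=
  fun x => (Fintype.equivFinOfCardEq (by simp : Fintype.card (Fin (n/2+1) → Bool) = 2^(n/2+1))).symm (C x)

lemma colc_inj {x x' : Conf n} (h : colc F C x = colc F C x') : C x = C x' := by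
  have := congrArg (Fintype.equivFinOfCardEq
    (by simp : Fintype.card (Fin (n/2+1) → Bool) = 2^(n/2+1))) h
  simpa [colc] using this

lemma wd (j : ℕ) (x x' : Conf n)
    (hm : updSet F (prefUnion (seqSched n) j) x' = updSet F (prefUnion (seqSched n) j) x)
    (hc : colc F C x' = colc F C x) : x' = x := by
  by_contra hne
  apply C.valid ?_ (colc_inj F C hc)
  refine ⟨hne, ?_⟩
  by_cases hj : j ≤ n/2
  · left
    intro i hi
    have h1 := congrFun hm i
    rw [updSet_seq_apply, updSet_seq_apply, if_neg (by omega), if_neg (by omega)] at h1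
    exact h1
  · right
    intro i hi
    have h1 := congrFun hm i
    rw [updSet_seq_apply, updSet_seq_apply, if_pos (by omega), if_pos (by omega)] at h1
    exact h1

/-- Realizability of a configuration of the extended network at step `j`. -/
def Pprop (j : ℕ) (z : Conf (n + (n/2+1))) : Prop :=
  ∃ x : Conf n, updSet F (prefUnion (seqSched n) j) x = proj (n/2+1) z ∧
    colc F C x = fun e => z (Fin.natAdd n e)

open Classical in
/-- The extended network. -/
noncomputable def Fext : Conf (n + (n/2+1)) → Conf (n + (n/2+1)) := fun z w =>
  Fin.addCases
    (fun j : Fin n => if (j : ℕ) = 0 then F (proj (n/2+1) z) j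
      else (if hP : Pprop F C (j : ℕ) z then F (Classical.choose hP) j else false))
    (fun e => colc F C (proj (n/2+1) z) e) w

/-- The expected configuration of the extended network after `j` steps on input `x`. -/
noncomputable def stateC (j : ℕ) (x : Conf n) : Conf (n + (n/2+1)) := fun w =>
  Fin.addCases (fun i : Fin n => updSet F (prefUnion (seqSched n) j) x i)
    (fun e => colc F C x e) w

lemma proj_stateC (j : ℕ) (x : Conf n) :
    proj (n/2+1) (stateC F C j x) = updSet F (prefUnion (seqSched n) j) x := by
  funext i
  simp only [proj, stateC]
  exact Fin.addCases_left i

lemma natAdd_stateC (j : ℕ) (x : Conf n) (e : Fin (n/2+1)) :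
    stateC F C j x (Fin.natAdd n e) = colc F C x e := by
  simp only [stateC]
  exact Fin.addCases_right e

lemma updSet_Fext_zero (hn : 0 < n) (z : Conf (n + (n/2+1))) :
    updSet (Fext F C) (blocks (n/2+1) ⟨0, hn⟩) z = stateC F C 1 (proj (n/2+1) z) := by
  classical
  funext w
  rw [updSet]
  induction w using Fin.addCases with
  | left i =>
    have hR : stateC F C 1 (proj (n/2+1) z) (Fin.castAdd (n/2+1) i)
        = updSet F (prefUnion (seqSched n) 1) (proj (n/2+1) z) i := by
      simp only [stateC]; exact Fin.addCases_left i
    have hL : Fext F C z (Fin.castAdd (n/2+1) i)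
        = if (i : ℕ) = 0 then F (proj (n/2+1) z) i
          else (if hP : Pprop F C (i : ℕ) z then F (Classical.choose hP) i else false) := by
      simp only [Fext]; exact Fin.addCases_left i
    rw [hR, updSet_seq_apply]
    by_cases hi : i = ⟨0, hn⟩
    · rw [if_pos ((castAdd_mem_blocks ⟨0, hn⟩ i).mpr hi), hL,
        if_pos (by rw [hi]), if_pos (show (i:ℕ) < 1 by rw [hi]; exact Nat.zero_lt_one)]
    · rw [if_neg (fun h => hi ((castAdd_mem_blocks ⟨0, hn⟩ i).mp h)),
        if_neg (by simp only [Fin.ext_iff] at hi; omega)]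
      rfl
  | right e =>
    rw [if_pos ((natAdd_mem_blocks _ _).mpr rfl), natAdd_stateC]
    simp only [Fext]
    exact Fin.addCases_right e

lemma updSet_Fext_step (j : ℕ) (hj1 : 1 ≤ j) (hjn : j < n) (x : Conf n) :
    updSet (Fext F C) (blocks (n/2+1) ⟨j, hjn⟩) (stateC F C j x) = stateC F C (j+1) x := by
  classical
  funext w
  rw [updSet]
  induction w using Fin.addCases with
  | left i =>
    have hR : stateC F C (j+1) x (Fin.castAdd (n/2+1) i)
        = updSet F (prefUnion (seqSched n) (j+1)) x i := by
      simp only [stateC]; exact Fin.addCases_left i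
    have hL : Fext F C (stateC F C j x) (Fin.castAdd (n/2+1) i)
        = if (i : ℕ) = 0 then F (proj (n/2+1) (stateC F C j x)) i
          else (if hP : Pprop F C (i : ℕ) (stateC F C j x) then F (Classical.choose hP) i
            else false) := by
      simp only [Fext]; exact Fin.addCases_left i
    have hmid : stateC F C j x (Fin.castAdd (n/2+1) i)
        = updSet F (prefUnion (seqSched n) j) x i := by
      simp only [stateC]; exact Fin.addCases_left i
    rw [hR, updSet_seq_apply]
    by_cases hi : i = ⟨j, hjn⟩
    · have hiv : (i : ℕ) = j := by rw [hi]
      rw [if_pos ((castAdd_mem_blocks ⟨j, hjn⟩ i).mpr hi), hL, if_neg (by omega),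
        if_pos (by omega)]
      have hP : Pprop F C (i : ℕ) (stateC F C j x) := by
        refine ⟨x, ?_, ?_⟩
        · rw [proj_stateC, hiv]
        · funext e; rw [natAdd_stateC]
      rw [dif_pos hP]
      obtain ⟨hm, hc⟩ := Classical.choose_spec hP
      subst hiv
      have hm' : updSet F (prefUnion (seqSched n) (i : ℕ)) (Classical.choose hP)
          = updSet F (prefUnion (seqSched n) (i : ℕ)) x := by
        rw [hm, proj_stateC]
      have hcc : colc F C (Classical.choose hP) = colc F C x := by
        rw [hc]; funext e; rw [natAdd_stateC]
      have hxx : Classical.choose hP = x := wd F C (i : ℕ) x (Classical.choose hP) hm' hcc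
      exact congrFun (congrArg F hxx) i
    · rw [if_neg (fun h => hi ((castAdd_mem_blocks ⟨j, hjn⟩ i).mp h)), hmid, updSet_seq_apply]
      have hiv : (i : ℕ) ≠ j := by
        intro h; exact hi (Fin.ext h)
      by_cases hlt : (i : ℕ) < j
      · rw [if_pos hlt, if_pos (by omega)]
      · rw [if_neg hlt, if_neg (by omega)]
  | right e =>
    rw [if_neg (fun h => by have := (natAdd_mem_blocks _ e).mp h; simp at this; omega),
      natAdd_stateC, natAdd_stateC]

lemma foldl_take (hn : 0 < n) (z : Conf (n + (n/2+1))) :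
    ∀ j, 1 ≤ j → j ≤ n →
    List.foldl (fun y B => updSet (Fext F C) B y) z
      (((List.finRange n).take j).map (blocks (n/2+1)))
      = stateC F C j (proj (n/2+1) z) := by
  intro j
  induction j with
  | zero => omega
  | succ j ih =>
    intro _ h2
    have hjlen : j < (List.finRange n).length := by simp; omega
    have hget : (List.finRange n)[j] = ⟨j, by omega⟩ := by
      simp [List.getElem_finRange, Fin.ext_iff]
    rcases Nat.eq_zero_or_pos j with rfl | hj
    · rw [List.take_succ, List.getElem?_eq_getElem hjlen, hget]
      simp only [List.take_zero, List.nil_append, Option.toList_some, List.map_cons,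
        List.map_nil, List.foldl_cons, List.foldl_nil]
      exact updSet_Fext_zero F C hn z
    · rw [List.take_succ, List.getElem?_eq_getElem hjlen, hget, List.map_append,
        List.foldl_append, ih hj (by omega)]
      simp only [Option.toList_some, List.map_cons, List.map_nil, List.foldl_cons,
        List.foldl_nil]
      exact updSet_Fext_step F C j hj (by omega) (proj (n/2+1) z)

lemma Fext_simulates (hn : 0 < n) :
    simulates (Fext F C) ((List.finRange n).map (blocks (n/2+1))) F (Fin.castAdd (n/2+1)) := by
  intro z
  have hrun : runSched (Fext F C) ((List.finRange n).map (blocks (n/2+1))) z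
      = stateC F C n (proj (n/2+1) z) := by
    rw [runSched, show (List.finRange n) = (List.finRange n).take n from
      (List.take_of_length_le (by simp)).symm]
    exact foldl_take F C hn z n hn le_rfl
  funext i
  have h1 : stateC F C n (proj (n/2+1) z) (Fin.castAdd (n/2+1) i)
      = updSet F (prefUnion (seqSched n) n) (proj (n/2+1) z) i := by
    simp only [stateC]; exact Fin.addCases_left i
  show runSched (Fext F C) ((List.finRange n).map (blocks (n/2+1))) z (Fin.castAdd (n/2+1) i)
      = F (fun i' => z (Fin.castAdd (n/2+1) i')) i
  rw [hrun, h1, updSet_seq_apply, if_pos i.isLt]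
  rfl

lemma blocks_isSchedule (hn : 0 < n) :
    isSchedule ((List.finRange n).map (blocks (n := n) (n/2+1))) := by
  refine ⟨?_, ?_, ?_⟩
  · intro B hB
    obtain ⟨j, _, rfl⟩ := List.mem_map.mp hB
    exact ⟨Fin.castAdd (n/2+1) j, (castAdd_mem_blocks j j).mpr rfl⟩
  · rw [List.pairwise_map]
    refine List.Pairwise.imp ?_ (List.nodup_finRange n)
    intro j j' hjj'
    rw [Finset.disjoint_left]
    intro w hw hw'
    induction w using Fin.addCases with
    | left i =>
      rw [castAdd_mem_blocks] at hw hw'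
      exact hjj' (hw ▸ hw')
    | right e =>
      rw [natAdd_mem_blocks] at hw hw'
      exact hjj' (Fin.ext (hw.trans hw'.symm))
  · apply Finset.eq_univ_of_forall
    intro w
    rw [mem_foldr_union_s16]
    induction w using Fin.addCases with
    | left i =>
      exact ⟨blocks (n/2+1) i, List.mem_map.mpr ⟨i, List.mem_finRange i, rfl⟩,
        (castAdd_mem_blocks i i).mpr rfl⟩
    | right e =>
      exact ⟨blocks (n/2+1) ⟨0, hn⟩, List.mem_map.mpr ⟨⟨0, hn⟩, List.mem_finRange _, rfl⟩,
        (natAdd_mem_blocks ⟨0, hn⟩ e).mpr rfl⟩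

lemma stepOf_blocks (i : Fin n) :
    stepOf ((List.finRange n).map (blocks (n := n) (n/2+1))) (Fin.castAdd (n/2+1) i)
      = (i : ℕ) := by
  apply findIdx_eq_of
  case hj => simp
  case hpj =>
    simp only [List.getElem_map, List.getElem_finRange, decide_eq_true_eq]
    rw [castAdd_mem_blocks]
    simp [Fin.ext_iff]
  case hlt =>
    intro j' hj'
    simp only [List.getElem_map, List.getElem_finRange, decide_eq_false_iff_not]
    rw [castAdd_mem_blocks]
    simp only [Fin.ext_iff, Fin.coe_cast]
    omega

lemma blocks_extends (hn : 0 < n) :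
    extendsSched (seqSched n) ((List.finRange n).map (blocks (n := n) (n/2+1)))
      (Fin.castAdd (n/2+1)) := by
  intro i i'
  rw [stepOf_seqSched, stepOf_seqSched, stepOf_blocks, stepOf_blocks]

end Main

lemma kappa_le_main {n : ℕ} (hn : 0 < n) (F : Conf n → Conf n) (hF : Function.Bijective F) :
    kappa F (seqSched n) ≤ n / 2 + 1 := by
  have h1 : (1:ℕ) ≤ 2 ^ (n / 2) := Nat.one_le_two_pow
  have h2 : 2 ^ (n - (n / 2 + 1)) ≤ 2 ^ (n / 2) :=
    Nat.pow_le_pow_right (by norm_num) (by omega)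
  have h3 : 2 ^ (n / 2 + 1) = 2 ^ (n / 2) * 2 := pow_succ 2 (n / 2)
  have hcol : (Hgr F (n / 2) (n / 2 + 1)).Colorable (2 ^ (n / 2 + 1)) := by
    apply greedy
    intro x
    exact lt_of_le_of_lt (Hgr_ncard F hF.injective (n / 2) (n / 2 + 1) (by omega) x) (by omega)
  obtain ⟨C⟩ := hcol
  apply Nat.sInf_le
  exact ⟨Fin.castAdd (n / 2 + 1), Fin.castAdd_injective _ _,
    (List.finRange n).map (blocks (n / 2 + 1)), blocks_isSchedule (n := n) hn,
    blocks_extends (n := n) hn, Fext F C, Fext_simulates F C hn⟩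

theorem stmt16 {n : ℕ} (F : Conf n → Conf n) (hF : Function.Bijective F) :
    (∀ x : Conf n,
        ((gnecc F (seqSched n)).neighborSet x).ncard ≤ 2 ^ ((n + 1) / 2 + 1) - 2) ∧
    (gnecc F (seqSched n)).chromaticNumber ≤ ((2 ^ ((n + 1) / 2 + 1) - 1 : ℕ) : ℕ∞) ∧
    (kappa F (seqSched n) : ℝ) ≤ (n : ℝ) / 2 + 1 := by
  set m := (n + 1) / 2 with hm
  have hmn : m ≤ n := by omega
  have h1 : (1:ℕ) ≤ 2 ^ m := Nat.one_le_two_pow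
  have h2 : 2 ^ (n - m) ≤ 2 ^ m := Nat.pow_le_pow_right (by norm_num) (by omega)
  have h3 : 2 ^ (m + 1) = 2 ^ m * 2 := pow_succ 2 m
  have hdeg : ∀ x : Conf n, ((Hgr F m m).neighborSet x).ncard ≤ 2 ^ m + 2 ^ (n - m) - 2 :=
    fun x => Hgr_ncard F hF.injective m m hmn x
  refine ⟨?_, ?_, ?_⟩
  · intro x
    have hsub : (gnecc F (seqSched n)).neighborSet x ⊆ (Hgr F m m).neighborSet x :=
      fun y hy => gnecc_le_Hgr F hy
    calc ((gnecc F (seqSched n)).neighborSet x).ncard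
        ≤ ((Hgr F m m).neighborSet x).ncard := Set.ncard_le_ncard hsub (Set.toFinite _)
      _ ≤ 2 ^ m + 2 ^ (n - m) - 2 := hdeg x
      _ ≤ 2 ^ (m + 1) - 2 := by omega
  · have hcol : (gnecc F (seqSched n)).Colorable (2 ^ (m + 1) - 1) := by
      refine SimpleGraph.Colorable.mono_left (gnecc_le_Hgr F) ?_
      apply greedy
      intro x
      exact lt_of_le_of_lt (hdeg x) (by omega)
    exact hcol.chromaticNumber_le
  · rcases Nat.eq_zero_or_pos n with rfl | hn
    · have := kappa_le_zero F
      have hc : (kappa F (seqSched 0) : ℝ) ≤ ((0 / 2 + 1 : ℕ) : ℝ) := by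
        exact_mod_cast this
      simpa using hc
    · have hk := kappa_le_main hn F hF
      have hc : (kappa F (seqSched n) : ℝ) ≤ ((n / 2 + 1 : ℕ) : ℝ) := by exact_mod_cast hk
      have hd : ((n / 2 : ℕ) : ℝ) ≤ (n : ℝ) / 2 := by
        have := Nat.div_mul_le_self n 2
        have h2' : ((n / 2 : ℕ) : ℝ) * 2 ≤ (n : ℝ) := by exact_mod_cast this
        linarith
      push_cast at hc
      linarith
end
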